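/- Let p be a prime, and let F_k(T) = \sum_{n≥0} a_n(k) T^n and F_{k'}(T) be formal power series over \mathbb{Z}_p that are Euler products F_k(T) = \prod_{x} (1 - α(x)^k T^{deg(x)})^{-1} over a countable index set with α(x) ∈ \mathbb{Z}_p^* and deg(x) ≥ 1, with only finitely many x of each degree. If k ≡ k' (mod (p-1)p^m), then F_k(T) ≡ F_{k'}(T) (mod p^{m+1}) coefficientwise. -/

import Mathlib

open PowerSeries

/-- The Euler factor `(1 - a T^d)^{-1}` as a formal power series over `ℤ_p`
(the inverse of `1 - a T^d`, which has constant term `1`). -/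
noncomputable def eulerFactor (p : ℕ) [Fact p.Prime] (a : ℤ_[p]) (d : ℕ) :
    PowerSeries ℤ_[p] :=
  PowerSeries.invOfUnit (1 - PowerSeries.C (R := ℤ_[p]) a * PowerSeries.X ^ d) 1


lemma eulerFactor_mul (p : ℕ) [Fact p.Prime] (a : ℤ_[p]) (d : ℕ) (hd : 1 ≤ d) :
    (1 - PowerSeries.C (R := ℤ_[p]) a * PowerSeries.X ^ d) * eulerFactor p a d = 1 := by
  apply PowerSeries.mul_invOfUnit
  have : (PowerSeries.constantCoeff (R := ℤ_[p])) (PowerSeries.X ^ d : PowerSeries ℤ_[p]) = 0 := by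
    rw [map_pow, PowerSeries.constantCoeff_X, zero_pow (by omega)]
  simp [this]

lemma map_eulerFactor_eq {p : ℕ} [Fact p.Prime] {S : Type*} [CommRing S]
    (φ : ℤ_[p] →+* S) (a a' : ℤ_[p]) (d : ℕ) (hd : 1 ≤ d) (h : φ a = φ a') :
    PowerSeries.map φ (eulerFactor p a d) = PowerSeries.map φ (eulerFactor p a' d) := by
  have key : ∀ b : ℤ_[p],
      (1 - PowerSeries.C (R := S) (φ b) * PowerSeries.X ^ d) *
        PowerSeries.map φ (eulerFactor p b d) = 1 := by
    intro b
    have := congrArg (PowerSeries.map φ) (eulerFactor_mul p b d hd)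
    simpa [map_mul, map_sub, map_one, map_pow] using this
  have h1 := key a
  have h2 := key a'
  rw [h] at h1
  set g := 1 - PowerSeries.C (R := S) (φ a') * PowerSeries.X ^ d
  calc PowerSeries.map φ (eulerFactor p a d)
      = PowerSeries.map φ (eulerFactor p a d) * (g * PowerSeries.map φ (eulerFactor p a' d)) := by
        rw [h2, mul_one]
    _ = (g * PowerSeries.map φ (eulerFactor p a d)) * PowerSeries.map φ (eulerFactor p a' d) := by
        ring
    _ = PowerSeries.map φ (eulerFactor p a' d) := by rw [h1, one_mul]

/-- If `F_k(T) = ∏_x (1 - α(x)^k T^{deg x})^{-1}` and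
`F_{k'}(T) = ∏_x (1 - α(x)^{k'} T^{deg x})^{-1}` are Euler products over a countable
index set with `α(x) ∈ ℤ_p^*`, `deg x ≥ 1`, and only finitely many `x` of each degree
(so each coefficient is a finite product computation), then `k ≡ k' (mod (p-1)p^m)`
implies `F_k ≡ F_{k'} (mod p^{m+1})` coefficientwise. -/
theorem euler_product_congr (p : ℕ) [hp : Fact p.Prime] (m : ℕ)
    (ι : Type*) [Countable ι] (deg : ι → ℕ) (hdeg : ∀ x, 1 ≤ deg x)
    (α : ι → ℤ_[p]ˣ) (hfin : ∀ n : ℕ, {x : ι | deg x ≤ n}.Finite)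
    (k k' : ℤ) (F F' : PowerSeries ℤ_[p])
    (hF : ∀ n : ℕ, PowerSeries.coeff (R := ℤ_[p]) n F =
      PowerSeries.coeff (R := ℤ_[p]) n
        (∏ x ∈ (hfin n).toFinset, eulerFactor p ((α x ^ k : ℤ_[p]ˣ) : ℤ_[p]) (deg x)))
    (hF' : ∀ n : ℕ, PowerSeries.coeff (R := ℤ_[p]) n F' =
      PowerSeries.coeff (R := ℤ_[p]) n
        (∏ x ∈ (hfin n).toFinset, eulerFactor p ((α x ^ k' : ℤ_[p]ˣ) : ℤ_[p]) (deg x)))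
    (hcong : ((p : ℤ) - 1) * (p : ℤ) ^ m ∣ k - k') :
    ∀ n : ℕ, PowerSeries.coeff (R := ℤ_[p]) n F - PowerSeries.coeff (R := ℤ_[p]) n F' ∈
      Ideal.span {((p : ℤ_[p]) ^ (m + 1))} := by
  intro n
  set φ : ℤ_[p] →+* ZMod (p ^ (m + 1)) := PadicInt.toZModPow (m + 1)
  haveI : NeZero (p ^ (m + 1)) := ⟨pow_ne_zero _ hp.out.ne_zero⟩
  -- the key congruence on unit powers
  have hunit : ∀ x : ι, φ ((α x ^ k : ℤ_[p]ˣ) : ℤ_[p]) = φ ((α x ^ k' : ℤ_[p]ˣ) : ℤ_[p]) := by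
    intro x
    set u : (ZMod (p ^ (m + 1)))ˣ := Units.map φ.toMonoidHom (α x)
    have hord : (orderOf u : ℤ) ∣ k - k' := by
      refine dvd_trans ?_ hcong
      have h1 : orderOf u ∣ Fintype.card (ZMod (p ^ (m + 1)))ˣ := orderOf_dvd_card
      have h2 : Fintype.card (ZMod (p ^ (m + 1)))ˣ = p ^ m * (p - 1) := by
        rw [ZMod.card_units_eq_totient, Nat.totient_prime_pow hp.out (Nat.succ_pos m)]
        simp
      rw [h2] at h1
      have := Int.natCast_dvd_natCast.2 h1
      push_cast [Nat.cast_sub hp.out.one_le] at this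
      exact dvd_trans this (by ring_nf; exact dvd_refl _)
    have h1 : u ^ (k - k') = 1 := orderOf_dvd_iff_zpow_eq_one.mp hord
    have h2 : u ^ k = u ^ k' := by
      have : u ^ k = u ^ k' * u ^ (k - k') := by
        rw [← zpow_add]; ring_nf
      rw [this, h1, mul_one]
    calc φ ((α x ^ k : ℤ_[p]ˣ) : ℤ_[p])
        = ((Units.map φ.toMonoidHom (α x ^ k) : (ZMod (p ^ (m + 1)))ˣ) :
            ZMod (p ^ (m + 1))) := rfl
      _ = ((u ^ k : (ZMod (p ^ (m + 1)))ˣ) : ZMod (p ^ (m + 1))) := by rw [map_zpow]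
      _ = ((u ^ k' : (ZMod (p ^ (m + 1)))ˣ) : ZMod (p ^ (m + 1))) := congrArg Units.val h2
      _ = ((Units.map φ.toMonoidHom (α x ^ k') : (ZMod (p ^ (m + 1)))ˣ) :
            ZMod (p ^ (m + 1))) := by rw [map_zpow]
      _ = φ ((α x ^ k' : ℤ_[p]ˣ) : ℤ_[p]) := rfl
  have hprod : PowerSeries.map φ
        (∏ x ∈ (hfin n).toFinset, eulerFactor p ((α x ^ k : ℤ_[p]ˣ) : ℤ_[p]) (deg x)) =
      PowerSeries.map φ
        (∏ x ∈ (hfin n).toFinset, eulerFactor p ((α x ^ k' : ℤ_[p]ˣ) : ℤ_[p]) (deg x)) := by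
    rw [map_prod, map_prod]
    exact Finset.prod_congr rfl fun x _ =>
      map_eulerFactor_eq φ _ _ (deg x) (hdeg x) (hunit x)
  have hcoeff : φ (PowerSeries.coeff (R := ℤ_[p]) n F) = φ (PowerSeries.coeff (R := ℤ_[p]) n F') := by
    rw [hF n, hF' n, ← PowerSeries.coeff_map, hprod, PowerSeries.coeff_map]
  have : PowerSeries.coeff (R := ℤ_[p]) n F - PowerSeries.coeff (R := ℤ_[p]) n F' ∈ RingHom.ker φ := by
    rw [RingHom.mem_ker, map_sub, hcoeff, sub_self]
  rwa [PadicInt.ker_toZModPow] at this
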